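/- Let X be an n-poised set of N = (n+1)(n+2)/2 nodes. A squarefree polynomial μ of degree k ≤ n is a maximal curve for X (i.e., exactly d(n,k) nodes of X lie on μ) if and only if μ divides the fundamental polynomial of every node of X not lying on μ. -/

import Mathlib

open MvPolynomial
open scoped Classical

/-- Evaluation of a bivariate polynomial at a point of the plane. -/
noncomputable def evalPt (p : MvPolynomial (Fin 2) ℝ) (A : ℝ × ℝ) : ℝ :=
  MvPolynomial.eval ![A.1, A.2] p

/-- `p` is an `n`-fundamental polynomial of the node `A` with respect to the node set `X`. -/
def IsFund (n : ℕ) (X : Finset (ℝ × ℝ)) (A : ℝ × ℝ)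
    (p : MvPolynomial (Fin 2) ℝ) : Prop :=
  p.totalDegree ≤ n ∧ evalPt p A = 1 ∧ ∀ B ∈ X, B ≠ A → evalPt p B = 0

/-- The node set `X` is `n`-independent. -/
def Indep (n : ℕ) (X : Finset (ℝ × ℝ)) : Prop :=
  ∀ A ∈ X, ∃ p, IsFund n X A p

/-- `d(n,k) = N_n - N_{n-k} = k(2n+3-k)/2`. -/
def dd (n k : ℕ) : ℕ := k * (2 * n + 3 - k) / 2

/-- The node set `X` is `n`-poised. -/
def Poised (n : ℕ) (X : Finset (ℝ × ℝ)) : Prop :=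
  X.card = (n + 1) * (n + 2) / 2 ∧
  ∀ p : MvPolynomial (Fin 2) ℝ, p.totalDegree ≤ n →
    (∀ A ∈ X, evalPt p A = 0) → p = 0

/-- The space of polynomials of total degree at most `n` vanishing on `X`. -/
noncomputable def vanishSp (n : ℕ) (X : Finset (ℝ × ℝ)) :
    Submodule ℝ (MvPolynomial (Fin 2) ℝ) :=
  MvPolynomial.restrictTotalDegree (Fin 2) ℝ n ⊓
    ⨅ A ∈ X, LinearMap.ker ((MvPolynomial.aeval (R := ℝ) ![A.1, A.2]).toLinearMap)

/-! ### Auxiliary material -/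

section Aux

open Module

lemma sum2 (d : Fin 2 →₀ ℕ) : (d.sum fun _ e => e) = d 0 + d 1 := by
  rw [Finsupp.sum_fintype]
  · exact Fin.sum_univ_two _
  · intro i; rfl

def TT (m : ℕ) : Finset (ℕ × ℕ) := (Finset.range (m+1)).biUnion (fun j => Finset.HasAntidiagonal.antidiagonal j)

lemma mem_TT {m : ℕ} {p : ℕ × ℕ} : p ∈ TT m ↔ p.1 + p.2 ≤ m := by
  simp only [TT, Finset.mem_biUnion, Finset.mem_range, Finset.HasAntidiagonal.mem_antidiagonal]
  constructor
  · rintro ⟨j, hj, h⟩; omega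
  · intro h; exact ⟨p.1 + p.2, by omega, rfl⟩

lemma card_TT (m : ℕ) : (TT m).card = (m+1)*(m+2)/2 := by
  have hd : (TT m).card = ∑ j ∈ Finset.range (m+1), (Finset.HasAntidiagonal.antidiagonal j).card := by
    apply Finset.card_biUnion
    intro i hi j hj hij
    simp only [Finset.disjoint_left, Finset.HasAntidiagonal.mem_antidiagonal]
    intro a h1 h2; omega
  have h2 : ∑ j ∈ Finset.range (m+1), (Finset.HasAntidiagonal.antidiagonal j).card
      = ∑ j ∈ Finset.range (m+1), (j+1) := by
    apply Finset.sum_congr rfl; intro j _; exact Finset.Nat.card_antidiagonal j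
  have h3 : ∑ i ∈ Finset.range (m+2), i = (∑ j ∈ Finset.range (m+1), (j+1)) + 0 :=
    Finset.sum_range_succ' id (m+1)
  have h4 : (∑ i ∈ Finset.range (m+2), i) * 2 = (m+2)*(m+1) := by
    simpa using Finset.sum_range_id_mul_two (m+2)
  have h5 : (m+1)*(m+2) = (m+2)*(m+1) := by ring
  omega

lemma finrank_V (m : ℕ) :
    finrank ℝ (restrictTotalDegree (Fin 2) ℝ m) = (m+1)*(m+2)/2 := by
  set s : Set (Fin 2 →₀ ℕ) := { d | (d.sum fun _ e => e) ≤ m } with hs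
  have e : s ≃ (TT m : Finset (ℕ × ℕ)) :=
  { toFun := fun d => ⟨(d.1 0, d.1 1), by
      rw [mem_TT]; have := d.2; rwa [Set.mem_setOf_eq, sum2] at this⟩
    invFun := fun p => ⟨Finsupp.equivFunOnFinite.symm ![p.1.1, p.1.2], by
      have := mem_TT.mp p.2
      simp only [hs, Set.mem_setOf_eq, sum2]
      simpa using this⟩
    left_inv := by
      rintro ⟨d, hd⟩
      ext i
      simp only [Finsupp.equivFunOnFinite_symm_apply_apply]
      fin_cases i <;> simp
    right_inv := by
      rintro ⟨⟨a, b⟩, hp⟩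
      simp }
  haveI : Fintype s := Fintype.ofEquiv _ e.symm
  have hrw : restrictTotalDegree (Fin 2) ℝ m = MvPolynomial.restrictSupport ℝ s := rfl
  rw [hrw, finrank_eq_card_basis (basisRestrictSupport ℝ s)]
  rw [Fintype.card_congr e, Fintype.card_coe, card_TT]

set_option maxHeartbeats 800000 in
lemma deg_mul_ge {a b : MvPolynomial (Fin 2) ℝ} (ha : a ≠ 0) (hb : b ≠ 0) :
    a.totalDegree + b.totalDegree ≤ (a * b).totalDegree := by
  have hsel : ∀ c : MvPolynomial (Fin 2) ℝ, c ≠ 0 → ∃ d ∈ c.support,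
      (d 0 + d 1 = c.totalDegree) ∧ ∀ u ∈ c.support, u 0 + u 1 = c.totalDegree → u 0 ≤ d 0 := by
    intro c hc
    have hne : c.support.Nonempty := MvPolynomial.support_nonempty.mpr hc
    obtain ⟨d0, hd0, hd0eq⟩ := Finset.exists_mem_eq_sup c.support hne
      (fun u => u.sum fun _ e => e)
    have hS : (c.support.filter (fun u => u 0 + u 1 = c.totalDegree)).Nonempty := by
      refine ⟨d0, Finset.mem_filter.mpr ⟨hd0, ?_⟩⟩
      rw [← sum2, ← hd0eq]; rfl
    obtain ⟨d, hd, hdmax⟩ := Finset.exists_max_image _ (fun u => u 0) hS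
    rw [Finset.mem_filter] at hd
    exact ⟨d, hd.1, hd.2, fun u hu hueq => hdmax u (Finset.mem_filter.mpr ⟨hu, hueq⟩)⟩
  obtain ⟨d, hd, hdeq, hdmax⟩ := hsel a ha
  obtain ⟨g, hg, hgeq, hgmax⟩ := hsel b hb
  have key : (a * b).coeff (d + g) = a.coeff d * b.coeff g := by
    rw [MvPolynomial.coeff_mul]
    refine Finset.sum_eq_single (d, g) ?_ ?_
    · rintro ⟨u, v⟩ huv hne
      rw [Finset.HasAntidiagonal.mem_antidiagonal] at huv
      by_cases hu : a.coeff u = 0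
      · simp [hu]
      by_cases hv : b.coeff v = 0
      · simp [hv]
      exfalso
      have hus : u ∈ a.support := MvPolynomial.mem_support_iff.mpr hu
      have hvs : v ∈ b.support := MvPolynomial.mem_support_iff.mpr hv
      have h0 : u 0 + v 0 = d 0 + g 0 := by
        have h := DFunLike.congr_fun huv (0 : Fin 2)
        simpa [Finsupp.add_apply] using h
      have h1 : u 1 + v 1 = d 1 + g 1 := by
        have h := DFunLike.congr_fun huv (1 : Fin 2)
        simpa [Finsupp.add_apply] using h
      have hud : u 0 + u 1 ≤ a.totalDegree := by
        have := MvPolynomial.le_totalDegree hus; rwa [sum2] at this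
      have hvd : v 0 + v 1 ≤ b.totalDegree := by
        have := MvPolynomial.le_totalDegree hvs; rwa [sum2] at this
      have hu0 : u 0 + u 1 = a.totalDegree := by omega
      have hv0 : v 0 + v 1 = b.totalDegree := by omega
      have hmu := hdmax u hus hu0
      have hmv := hgmax v hvs hv0
      have eu0 : u 0 = d 0 := by omega
      have eu1 : u 1 = d 1 := by omega
      have ev0 : v 0 = g 0 := by omega
      have ev1 : v 1 = g 1 := by omega
      apply hne
      have hud' : u = d := by
        ext i; fin_cases i
        · exact eu0
        · exact eu1
      have hvg' : v = g := by
        ext i; fin_cases i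
        · exact ev0
        · exact ev1
      simp [hud', hvg']
    · intro h
      simp at h
  have hmem : (d + g) ∈ (a * b).support := by
    rw [MvPolynomial.mem_support_iff, key]
    exact mul_ne_zero (MvPolynomial.mem_support_iff.mp hd) (MvPolynomial.mem_support_iff.mp hg)
  have hle := MvPolynomial.le_totalDegree hmem
  rw [sum2] at hle
  simp only [Finsupp.add_apply] at hle
  omega

/-- Evaluation at a point, as a linear map. -/
noncomputable def evLM (A : ℝ × ℝ) : MvPolynomial (Fin 2) ℝ →ₗ[ℝ] ℝ where
  toFun p := evalPt p A
  map_add' p q := by simp [evalPt]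
  map_smul' c p := by simp [evalPt, MvPolynomial.smul_eval]

/-- Evaluation of polynomials of degree at most `m` at the nodes of `Y`. -/
noncomputable def evalMap (m : ℕ) (Y : Finset (ℝ × ℝ)) :
    restrictTotalDegree (Fin 2) ℝ m →ₗ[ℝ] (Y → ℝ) :=
  LinearMap.pi fun A => (evLM A.1).comp (restrictTotalDegree (Fin 2) ℝ m).subtype

lemma evalMap_apply (m : ℕ) (Y : Finset (ℝ × ℝ)) (p : restrictTotalDegree (Fin 2) ℝ m)
    (A : Y) : evalMap m Y p A = evalPt p.1 A.1 := rfl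

lemma finrank_fun (Y : Finset (ℝ × ℝ)) : Module.finrank ℝ (Y → ℝ) = Y.card := by
  rw [Module.finrank_pi, Fintype.card_coe]

/-- If each node of `Y` admits a polynomial of degree at most `m` not vanishing there
but vanishing at all other nodes of `Y`, then `evalMap m Y` is surjective. -/
lemma surj_of_indicators {m : ℕ} {Y : Finset (ℝ × ℝ)}
    (h : ∀ A ∈ Y, ∃ q : MvPolynomial (Fin 2) ℝ, q.totalDegree ≤ m ∧ evalPt q A ≠ 0 ∧
      ∀ B ∈ Y, B ≠ A → evalPt q B = 0) :
    Function.Surjective (evalMap m Y) := by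
  rw [← LinearMap.range_eq_top]
  rw [eq_top_iff]
  intro f _
  have hf : f = ∑ A : Y, Pi.single A (f A) := by
    ext B
    rw [Finset.sum_apply]
    rw [Finset.sum_eq_single B]
    · simp
    · intro A _ hAB; exact Pi.single_eq_of_ne (Ne.symm hAB) _
    · intro hB; exact absurd (Finset.mem_univ B) hB
  rw [hf]
  apply Submodule.sum_mem
  intro A _
  obtain ⟨q, hqd, hq1, hq0⟩ := h A.1 A.2
  have hmem : q ∈ restrictTotalDegree (Fin 2) ℝ m :=
    (MvPolynomial.mem_restrictTotalDegree _ _ _).mpr hqd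
  refine ⟨(f A / evalPt q A.1) • ⟨q, hmem⟩, ?_⟩
  ext B
  rw [map_smul]
  by_cases hBA : B = A
  · subst hBA
    simp only [Pi.smul_apply, evalMap_apply, smul_eq_mul, Pi.single_eq_same]
    field_simp
  · have : evalPt q B.1 = 0 := hq0 B.1 B.2 (fun hc => hBA (Subtype.ext hc))
    simp only [Pi.smul_apply, evalMap_apply, smul_eq_mul, this, mul_zero]
    rw [Pi.single_eq_of_ne hBA]

lemma card_le_of_indicators {m : ℕ} {Y : Finset (ℝ × ℝ)}
    (h : ∀ A ∈ Y, ∃ q : MvPolynomial (Fin 2) ℝ, q.totalDegree ≤ m ∧ evalPt q A ≠ 0 ∧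
      ∀ B ∈ Y, B ≠ A → evalPt q B = 0) :
    Y.card ≤ (m+1)*(m+2)/2 := by
  have hs := surj_of_indicators h
  have := LinearMap.finrank_range_le (evalMap m Y)
  rw [LinearMap.range_eq_top.mpr hs, finrank_top, finrank_fun, finrank_V] at this
  exact this

/-- A poised set admits fundamental polynomials. -/
lemma indep_of_poised {n : ℕ} {X : Finset (ℝ × ℝ)} (hX : Poised n X) : Indep n X := by
  have hinj : Function.Injective (evalMap n X) := by
    rw [← LinearMap.ker_eq_bot, eq_bot_iff]
    rintro ⟨p, hp⟩ hker
    have : p = 0 := by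
      apply hX.2 p ((MvPolynomial.mem_restrictTotalDegree _ _ _).mp hp)
      intro A hA
      exact congrFun (LinearMap.mem_ker.mp hker) ⟨A, hA⟩
    rw [Submodule.mem_bot, ← ZeroMemClass.coe_eq_zero]
    exact this
  have hsurj : Function.Surjective (evalMap n X) := by
    rw [← LinearMap.injective_iff_surjective_of_finrank_eq_finrank (by
      rw [finrank_V, finrank_fun, hX.1])]
    exact hinj
  intro A hA
  obtain ⟨p, hp⟩ := hsurj (Pi.single ⟨A, hA⟩ 1)
  refine ⟨p.1, (MvPolynomial.mem_restrictTotalDegree _ _ _).mp p.2, ?_, ?_⟩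
  · have := congrFun hp ⟨A, hA⟩
    rwa [evalMap_apply, Pi.single_eq_same] at this
  · intro B hB hBA
    have := congrFun hp ⟨B, hB⟩
    rwa [evalMap_apply, Pi.single_eq_of_ne (fun hc => hBA (congrArg Subtype.val hc))] at this

lemma arith {n k : ℕ} (hk : k ≤ n) :
    dd n k + (n-k+1)*(n-k+2)/2 = (n+1)*(n+2)/2 := by
  obtain ⟨m, rfl⟩ := Nat.exists_eq_add_of_le hk
  have h1 : 2 * (k + m) + 3 - k = k + 2*m + 3 := by omega
  rw [dd, h1]
  have e1 : Even (k * (k + 2*m + 3)) := by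
    rcases Nat.even_or_odd k with hk2 | hk2
    · exact hk2.mul_right _
    · apply Even.mul_left
      rw [Nat.even_iff]; rw [Nat.odd_iff] at hk2; omega
  have e2 : Even ((m+1)*(m+2)) := Nat.even_mul_succ_self (m+1)
  have e3 : k * (k + 2*m + 3) + (m+1)*(m+2) = (k+m+1)*(k+m+2) := by ring
  have h2 : k + m - k = m := by omega
  rw [h2]
  rw [Nat.even_iff] at e1 e2
  omega

/-- Number of nodes of a poised set on a curve of degree `k` is at most `d(n,k)`. -/
lemma card_filter_le {n k : ℕ} (hk : k ≤ n) {X : Finset (ℝ × ℝ)} (hX : Poised n X)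
    {μ : MvPolynomial (Fin 2) ℝ} (hμ : μ.totalDegree = k) (hμ0 : μ ≠ 0) :
    (X.filter fun A => evalPt μ A = 0).card + (n-k+1)*(n-k+2)/2 ≤ (n+1)*(n+2)/2 := by
  classical
  set Y := X.filter fun A => evalPt μ A = 0 with hY
  have hfund := indep_of_poised hX
  -- evaluation map on Y is surjective
  have hs : Function.Surjective (evalMap n Y) := by
    apply surj_of_indicators
    intro A hA
    have hAX : A ∈ X := (Finset.mem_filter.mp hA).1
    obtain ⟨p, hpd, hp1, hp0⟩ := hfund A hAX
    exact ⟨p, hpd, by rw [hp1]; norm_num,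
      fun B hB hBA => hp0 B (Finset.mem_filter.mp hB).1 hBA⟩
  -- multiplication by μ, from degree ≤ n - k to degree ≤ n
  have hmem : ∀ q : restrictTotalDegree (Fin 2) ℝ (n-k),
      μ * q.1 ∈ restrictTotalDegree (Fin 2) ℝ n := by
    rintro ⟨q, hq⟩
    rw [MvPolynomial.mem_restrictTotalDegree]
    calc (μ * q).totalDegree ≤ μ.totalDegree + q.totalDegree := totalDegree_mul μ q
    _ ≤ k + (n - k) := by
        exact add_le_add hμ.le ((MvPolynomial.mem_restrictTotalDegree _ _ _).mp hq)
    _ = n := by omega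
  let L : restrictTotalDegree (Fin 2) ℝ (n-k) →ₗ[ℝ] restrictTotalDegree (Fin 2) ℝ n :=
  { toFun := fun q => ⟨μ * q.1, hmem q⟩
    map_add' := fun q r => by ext; simp [mul_add]
    map_smul' := fun c q => by ext; simp [mul_smul_comm] }
  have hLinj : Function.Injective L := by
    rintro ⟨q, hq⟩ ⟨r, hr⟩ hqr
    have : μ * q = μ * r := congrArg Subtype.val hqr
    exact Subtype.ext (mul_left_cancel₀ hμ0 this)
  have hrange : LinearMap.range L ≤ LinearMap.ker (evalMap n Y) := by
    rintro x ⟨q, rfl⟩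
    rw [LinearMap.mem_ker]
    ext B
    have hB : evalPt μ B.1 = 0 := (Finset.mem_filter.mp B.2).2
    rw [evalMap_apply]
    show evalPt (μ * q.1) B.1 = 0
    simp only [evalPt, map_mul]
    exact mul_eq_zero.mpr (Or.inl hB)
  have hker : (n-k+1)*(n-k+2)/2 ≤ Module.finrank ℝ (LinearMap.ker (evalMap n Y)) := by
    calc (n-k+1)*(n-k+2)/2 = Module.finrank ℝ (restrictTotalDegree (Fin 2) ℝ (n-k)) :=
          (finrank_V _).symm
    _ = Module.finrank ℝ (LinearMap.range L) := (LinearMap.finrank_range_of_inj hLinj).symm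
    _ ≤ _ := Submodule.finrank_mono hrange
  have hrn := LinearMap.finrank_range_add_finrank_ker (evalMap n Y)
  rw [LinearMap.range_eq_top.mpr hs, finrank_top, finrank_fun, finrank_V] at hrn
  omega

end Aux

theorem stmt8 (n k : ℕ) (hk : k ≤ n) (X : Finset (ℝ × ℝ)) (hX : Poised n X)
    (μ : MvPolynomial (Fin 2) ℝ) (hμ : μ.totalDegree = k) (hsf : Squarefree μ) :
    (X.filter (fun A => evalPt μ A = 0)).card = dd n k ↔
      ∀ A ∈ X, evalPt μ A ≠ 0 → ∀ p, IsFund n X A p → μ ∣ p := by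
  classical
  have hμ0 : μ ≠ 0 := hsf.ne_zero
  set Y := X.filter (fun A => evalPt μ A = 0) with hYdef
  set Z := X.filter (fun A => ¬ evalPt μ A = 0) with hZdef
  have hsplit : Y.card + Z.card = X.card :=
    Finset.card_filter_add_card_filter_not _
  have harith := arith hk
  constructor
  · -- maximal curve ⇒ divisibility
    intro hcard A hA hμA p hp
    have hZcard : Z.card = (n-k+1)*(n-k+2)/2 := by
      have := hX.1
      omega
    -- evaluation map on Z, for degree n - k, is bijective
    have hinj : Function.Injective (evalMap (n-k) Z) := by
      rw [← LinearMap.ker_eq_bot, eq_bot_iff]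
      rintro ⟨q, hq⟩ hker
      have hq0 : q = 0 := by
        by_contra hq0
        have hvan : ∀ B ∈ X, evalPt (μ * q) B = 0 := by
          intro B hB
          simp only [evalPt, map_mul]
          by_cases hμB : evalPt μ B = 0
          · exact mul_eq_zero.mpr (Or.inl hμB)
          · have hBZ : B ∈ Z := Finset.mem_filter.mpr ⟨hB, hμB⟩
            have hzz := congrFun (LinearMap.mem_ker.mp hker) ⟨B, hBZ⟩
            rw [evalMap_apply] at hzz
            simp only [Pi.zero_apply] at hzz
            exact mul_eq_zero.mpr (Or.inr hzz)
        have hdeg : (μ * q).totalDegree ≤ n := by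
          calc (μ * q).totalDegree ≤ μ.totalDegree + q.totalDegree := totalDegree_mul μ q
          _ ≤ k + (n-k) := add_le_add hμ.le ((MvPolynomial.mem_restrictTotalDegree _ _ _).mp hq)
          _ = n := by omega
        have := hX.2 _ hdeg hvan
        rcases mul_eq_zero.mp this with h | h
        · exact hμ0 h
        · exact hq0 h
      rw [Submodule.mem_bot, ← ZeroMemClass.coe_eq_zero]
      exact hq0
    have hsurj : Function.Surjective (evalMap (n-k) Z) := by
      rw [← LinearMap.injective_iff_surjective_of_finrank_eq_finrank (by
        rw [finrank_V, finrank_fun, hZcard])]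
      exact hinj
    have hAZ : A ∈ Z := Finset.mem_filter.mpr ⟨hA, hμA⟩
    obtain ⟨q, hq⟩ := hsurj (Pi.single ⟨A, hAZ⟩ 1)
    set c := evalPt μ A with hc
    have hqA : evalPt q.1 A = 1 := by
      have := congrFun hq ⟨A, hAZ⟩
      rwa [evalMap_apply, Pi.single_eq_same] at this
    have hq0 : ∀ B ∈ Z, B ≠ A → evalPt q.1 B = 0 := by
      intro B hB hBA
      have := congrFun hq ⟨B, hB⟩
      rwa [evalMap_apply, Pi.single_eq_of_ne (fun hc => hBA (congrArg Subtype.val hc))] at this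
    -- p₀ is a fundamental polynomial of A
    set p₀ : MvPolynomial (Fin 2) ℝ := c⁻¹ • (μ * q.1) with hp₀
    have hfund₀ : IsFund n X A p₀ := by
      refine ⟨?_, ?_, ?_⟩
      · calc p₀.totalDegree ≤ (μ * q.1).totalDegree := totalDegree_smul_le _ _
        _ ≤ μ.totalDegree + q.1.totalDegree := totalDegree_mul _ _
        _ ≤ k + (n-k) := add_le_add hμ.le ((MvPolynomial.mem_restrictTotalDegree _ _ _).mp q.2)
        _ = n := by omega
      · rw [hp₀]
        simp only [evalPt, MvPolynomial.smul_eval, map_mul]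
        rw [show MvPolynomial.eval ![A.1, A.2] μ = c from rfl]
        rw [show MvPolynomial.eval ![A.1, A.2] q.1 = 1 from hqA]
        field_simp
      · intro B hB hBA
        by_cases hμB : evalPt μ B = 0
        · rw [hp₀]; simp only [evalPt, MvPolynomial.smul_eval, map_mul]
          rw [show MvPolynomial.eval ![B.1, B.2] μ = 0 from hμB]
          ring
        · have hBZ : B ∈ Z := Finset.mem_filter.mpr ⟨hB, hμB⟩
          rw [hp₀]; simp only [evalPt, MvPolynomial.smul_eval, map_mul]
          rw [show MvPolynomial.eval ![B.1, B.2] q.1 = 0 from hq0 B hBZ hBA]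
          ring
    -- uniqueness of fundamental polynomial
    have huniq : p = p₀ := by
      have hdeg : (p - p₀).totalDegree ≤ n := by
        rw [sub_eq_add_neg]
        calc (p + -p₀).totalDegree ≤ max p.totalDegree (-p₀).totalDegree := totalDegree_add _ _
        _ ≤ n := by rw [totalDegree_neg]; exact max_le hp.1 hfund₀.1
      have hvan : ∀ B ∈ X, evalPt (p - p₀) B = 0 := by
        intro B hB
        by_cases hBA : B = A
        · subst hBA
          simp [evalPt, map_sub] at *
          rw [show MvPolynomial.eval ![B.1, B.2] p = 1 from hp.2.1,
            show MvPolynomial.eval ![B.1, B.2] p₀ = 1 from hfund₀.2.1]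
          ring
        · simp only [evalPt, map_sub]
          rw [show MvPolynomial.eval ![B.1, B.2] p = 0 from hp.2.2 B hB hBA,
            show MvPolynomial.eval ![B.1, B.2] p₀ = 0 from hfund₀.2.2 B hB hBA]
          ring
      exact sub_eq_zero.mp (hX.2 _ hdeg hvan)
    rw [huniq, hp₀]
    exact ⟨c⁻¹ • q.1, (mul_smul_comm c⁻¹ μ q.1).symm⟩
  · -- divisibility ⇒ maximal curve
    intro h
    have hb1 := card_filter_le hk hX hμ hμ0
    have hb2 : Z.card ≤ (n-k+1)*(n-k+2)/2 := by
      apply card_le_of_indicators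
      intro A hA
      have hAX : A ∈ X := (Finset.mem_filter.mp hA).1
      have hμA : evalPt μ A ≠ 0 := (Finset.mem_filter.mp hA).2
      obtain ⟨p, hpfund⟩ := indep_of_poised hX A hAX
      obtain ⟨q, rfl⟩ := h A hAX hμA p hpfund
      have hq0 : q ≠ 0 := by
        rintro rfl
        rw [mul_zero] at hpfund
        have := hpfund.2.1
        simp [evalPt] at this
      have hdq : q.totalDegree ≤ n - k := by
        have := deg_mul_ge hμ0 hq0
        have h2 := hpfund.1
        omega
      refine ⟨q, hdq, ?_, ?_⟩
      · intro hqA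
        have := hpfund.2.1
        simp only [evalPt, map_mul] at this
        rw [show MvPolynomial.eval ![A.1, A.2] q = 0 from hqA] at this
        simp at this
      · intro B hB hBA
        have hBX : B ∈ X := (Finset.mem_filter.mp hB).1
        have hμB : evalPt μ B ≠ 0 := (Finset.mem_filter.mp hB).2
        have := hpfund.2.2 B hBX hBA
        simp only [evalPt, map_mul] at this
        rcases mul_eq_zero.mp this with hcase | hcase
        · exact absurd hcase hμB
        · exact hcase
    rw [← hYdef] at hb1
    have hX1 : X.card = (n+1)*(n+2)/2 := hX.1
    omega
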